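/- Let H be a Lie subalgebra of finite codimension of sl₂(K[λ]). Then every solvable ideal of the Lie algebra H is zero. -/

import Mathlib

attribute [local instance 100] LieRing.ofAssociativeRing

/-- The Lie algebra `sl₂(K[λ])` of traceless `2×2` matrices over the polynomial ring `K[λ]`,
regarded as a Lie algebra over `K`. -/
def sl2Poly (K : Type*) [Field K] :
    LieSubalgebra K (Matrix (Fin 2) (Fin 2) (Polynomial K)) where
  carrier := {A | Matrix.trace A = 0}
  add_mem' := fun {a b} ha hb => by
    simp only [Set.mem_setOf_eq, Matrix.trace_add] at *
    rw [ha, hb, add_zero]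
  zero_mem' := by simp
  smul_mem' := fun c a ha => by
    simp only [Set.mem_setOf_eq, Matrix.trace_smul] at *
    rw [ha, smul_zero]
  lie_mem' := fun {a b} _ _ => by
    show Matrix.trace ⁅a, b⁆ = 0
    rw [Ring.lie_def, Matrix.trace_sub, Matrix.trace_mul_comm, sub_self]

lemma sl2_key {K : Type*} [Field K] [CharZero K]
    (x : Matrix (Fin 2) (Fin 2) (Polynomial K)) (htr : Matrix.trace x = 0)
    (he : ⁅x, ⁅x, (!![0,1;0,0] : Matrix (Fin 2) (Fin 2) (Polynomial K))⁆⁆ = 0)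
    (hf : ⁅x, ⁅x, (!![0,0;1,0] : Matrix (Fin 2) (Fin 2) (Polynomial K))⁆⁆ = 0) :
    x = 0 := by
  rw [Matrix.trace_fin_two] at htr
  have E10 := congrFun (congrFun he 1) 0
  have E01 := congrFun (congrFun he 0) 1
  have F01 := congrFun (congrFun hf 0) 1
  simp only [Ring.lie_def, Matrix.sub_apply, Matrix.mul_apply, Fin.sum_univ_two,
    Matrix.cons_val', Matrix.cons_val_zero, Matrix.cons_val_one, Matrix.head_cons,
    Matrix.head_fin_const, Matrix.empty_val', Matrix.cons_val_fin_one, Matrix.of_apply,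
    Matrix.zero_apply, mul_zero, zero_mul, mul_one, one_mul, add_zero, zero_add, sub_zero,
    zero_sub] at E10 E01 F01
  have hc : x 1 0 = 0 := by
    have h2 : (2 : Polynomial K) * (x 1 0 * x 1 0) = 0 := by linear_combination -E10
    exact mul_self_eq_zero.mp ((mul_eq_zero.mp h2).resolve_left two_ne_zero)
  have hb : x 0 1 = 0 := by
    have h2 : (2 : Polynomial K) * (x 0 1 * x 0 1) = 0 := by linear_combination -F01
    exact mul_self_eq_zero.mp ((mul_eq_zero.mp h2).resolve_left two_ne_zero)
  have ha : x 0 0 = 0 := by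
    have h2 : (2 : Polynomial K) * ((2 : Polynomial K) * (x 0 0 * x 0 0)) = 0 := by
      linear_combination E01 + (3 * x 0 0 - x 1 1) * htr - 2 * x 0 1 * hc
    have := (mul_eq_zero.mp h2).resolve_left two_ne_zero
    exact mul_self_eq_zero.mp ((mul_eq_zero.mp this).resolve_left two_ne_zero)
  have hd : x 1 1 = 0 := by linear_combination htr - ha
  ext i j
  fin_cases i <;> fin_cases j <;> simp [ha, hb, hc, hd]

lemma sl2_exists_y {K : Type*} [Field K] [CharZero K]
    (x : Matrix (Fin 2) (Fin 2) (Polynomial K)) (htr : Matrix.trace x = 0) (hx : x ≠ 0) :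
    ∃ y : Matrix (Fin 2) (Fin 2) (Polynomial K), Matrix.trace y = 0 ∧ ⁅x, ⁅x, y⁆⁆ ≠ 0 := by
  by_contra h
  push_neg at h
  refine hx (sl2_key x htr (h _ ?_) (h _ ?_)) <;> simp [Matrix.trace_fin_two]

/-- If `H` is a Lie subalgebra of finite codimension of `sl₂(K[λ])`
(`K = ℝ` or `ℂ`), then every solvable ideal of `H` is zero. -/
theorem stmt_0 {K : Type*} [RCLike K]
    (H : LieSubalgebra K (sl2Poly K))
    (hcodim : FiniteDimensional K ((sl2Poly K) ⧸ H.toSubmodule))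
    (I : LieIdeal K H) (hI : LieAlgebra.IsSolvable I) :
    I = ⊥ := by
  classical
  by_contra hne
  -- find minimal k with derived series bot
  obtain ⟨k, hk⟩ := LieAlgebra.IsSolvable.solvable K I
  rw [LieIdeal.derivedSeries_eq_bot_iff] at hk
  have hex : ∃ n, LieAlgebra.derivedSeriesOfIdeal K H n I = ⊥ := ⟨k, hk⟩
  set n := Nat.find hex with hn
  have hnbot : LieAlgebra.derivedSeriesOfIdeal K H n I = ⊥ := Nat.find_spec hex
  have hn0 : n ≠ 0 := by
    intro h0
    rw [h0, LieAlgebra.derivedSeriesOfIdeal_zero] at hnbot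
    exact hne hnbot
  set J := LieAlgebra.derivedSeriesOfIdeal K H (n - 1) I with hJ
  have hJne : J ≠ ⊥ := Nat.find_min hex (Nat.sub_lt (Nat.pos_of_ne_zero hn0) one_pos)
  have hJJ : ⁅J, J⁆ = (⊥ : LieIdeal K H) := by
    rw [hJ, ← LieAlgebra.derivedSeriesOfIdeal_succ,
      (by omega : n - 1 + 1 = n)]
    exact hnbot
  -- nonzero element of J
  have : ∃ x : H, x ∈ J ∧ x ≠ 0 := by
    by_contra hcon
    push_neg at hcon
    exact hJne ((LieSubmodule.eq_bot_iff J).mpr fun m hm => hcon m hm)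
  obtain ⟨x', hx'J, hx'0⟩ := this
  -- ad x'^2 kills H
  have hkill : ∀ h : H, ⁅x', ⁅x', h⁆⁆ = 0 := by
    intro h
    have h1 : ⁅x', h⁆ ∈ J := by
      rw [← lie_skew]
      exact J.neg_mem (J.lie_mem hx'J)
    have h2 : ⁅x', ⁅x', h⁆⁆ ∈ (⁅J, J⁆ : LieIdeal K H) := LieSubmodule.lie_mem_lie hx'J h1
    rw [hJJ] at h2
    exact h2
  -- pass to matrices
  set X : Matrix (Fin 2) (Fin 2) (Polynomial K) :=
    ((x' : sl2Poly K) : Matrix (Fin 2) (Fin 2) (Polynomial K)) with hX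
  have hX0 : X ≠ 0 := by
    intro h0
    exact hx'0 (Subtype.ext (Subtype.ext h0))
  have hXtr : Matrix.trace X = 0 := (x' : sl2Poly K).2
  obtain ⟨y, hytr, hz⟩ := sl2_exists_y X hXtr hX0
  set z := ⁅X, ⁅X, y⁆⁆ with hzdef
  have hkillM : ∀ h : H,
      ⁅X, ⁅X, ((h : sl2Poly K) : Matrix (Fin 2) (Fin 2) (Polynomial K))⁆⁆ = 0 := by
    intro h
    have := congrArg
      (fun a : H => ((a : sl2Poly K) : Matrix (Fin 2) (Fin 2) (Polynomial K))) (hkill h)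
    simpa using this
  have hmem : ∀ p : Polynomial K, p • y ∈ sl2Poly K := fun p => by
    show Matrix.trace (p • y) = 0
    rw [Matrix.trace_smul, hytr, smul_zero]
  let φ : Polynomial K →ₗ[K] (sl2Poly K) :=
    { toFun := fun p => ⟨p • y, hmem p⟩
      map_add' := fun p q => by
        apply Subtype.ext
        simp [add_smul]
      map_smul' := fun c p => by
        apply Subtype.ext
        show (c • p) • y = c • (p • y)
        rw [smul_assoc] }
  let ψ := (H.toSubmodule.mkQ).comp φ
  have hinj : Function.Injective ψ := by
    rw [injective_iff_map_eq_zero]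
    intro p hp
    have hmemH : φ p ∈ H.toSubmodule := by
      rwa [LinearMap.comp_apply, Submodule.mkQ_apply, Submodule.Quotient.mk_eq_zero] at hp
    have h3 : ⁅X, ⁅X, p • y⁆⁆ = 0 := hkillM ⟨φ p, hmemH⟩
    have lsm : ∀ w : Matrix (Fin 2) (Fin 2) (Polynomial K), ⁅X, p • w⁆ = p • ⁅X, w⁆ :=
      fun w => by
        simp only [Ring.lie_def, Matrix.mul_smul, Matrix.smul_mul, smul_sub]
    have h4 : p • z = 0 := by
      rw [hzdef, ← lsm, ← lsm]
      exact h3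
    by_contra hp0
    apply hz
    refine Matrix.ext fun i j => ?_
    have h5 := congrFun (congrFun h4 i) j
    simp only [Matrix.smul_apply, smul_eq_mul, Matrix.zero_apply] at h5
    rcases mul_eq_zero.mp h5 with h | h
    · exact absurd h hp0
    · simpa using h
  have : Module.Finite K (Polynomial K) := Module.Finite.of_injective ψ hinj
  exact Polynomial.not_finite this
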